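/- Let φ = C₁ ∧ … ∧ C_m be a monotone 3-CNF formula with zones Z_φ and Z'_φ constructed from it. For every configuration γ' satisfying the node (Z'_φ, ∅) via a surjection h', if some subset γ'' ⊆ γ' satisfies the node (Z_φ, ∅), then there is a clause C_i such that h'(x^i_j) ∈ γ'' and h'(y^i_j) ∈ γ'' for each j = 1, 2, 3. -/
import Mathlib


open scoped Classical NNReal

namespace ATAPaper

/-! ## Intervals with natural endpoints (possibly unbounded) -/

inductive NInterval where
  | cc (a b : ℕ)
  | co (a b : ℕ)
  | oc (a b : ℕ)
  | oo (a b : ℕ)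
  | ci (a : ℕ)
  | oi (a : ℕ)
deriving DecidableEq

/-- Membership of a nonnegative real in an interval. -/
def NInterval.mem (v : ℝ≥0) : NInterval → Prop
  | .cc a b => (a : ℝ≥0) ≤ v ∧ v ≤ (b : ℝ≥0)
  | .co a b => (a : ℝ≥0) ≤ v ∧ v < (b : ℝ≥0)
  | .oc a b => (a : ℝ≥0) < v ∧ v ≤ (b : ℝ≥0)
  | .oo a b => (a : ℝ≥0) < v ∧ v < (b : ℝ≥0)
  | .ci a => (a : ℝ≥0) ≤ v
  | .oi a => (a : ℝ≥0) < v

/-- The largest constant appearing in an interval. -/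
def NInterval.bound : NInterval → ℕ
  | .cc a b | .co a b | .oc a b | .oo a b => max a b
  | .ci a | .oi a => a

/-! ## Transition formulas `Φ(Q)` with reset `x.φ` and deactivation `x̄.φ` -/

inductive TF (Q : Type*) where
  | tt
  | ff
  | loc (q : Q)
  | guard (I : NInterval)
  | and (φ ψ : TF Q)
  | or (φ ψ : TF Q)
  | reset (φ : TF Q)
  | deact (φ : TF Q)

/-- A state of a 1-ATA is a location together with a clock value which is
either inactive (`none` = ⊥) or a nonnegative real.  A configuration is a
finite set of states. -/
abbrev Config (Q : Type*) := Finset (Q × Option ℝ≥0)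

section BasicDefs

variable {Q A : Type*}

/-- `M ⊨_v φ`. -/
def TF.sat (M : Config Q) : TF Q → Option ℝ≥0 → Prop
  | .tt, _ => True
  | .ff, _ => False
  | .loc q, v => (q, v) ∈ M
  | .guard I, v => v = none ∨ ∃ r, v = some r ∧ I.mem r
  | .and φ ψ, v => φ.sat M v ∧ ψ.sat M v
  | .or φ ψ, v => φ.sat M v ∨ ψ.sat M v
  | .reset φ, _ => φ.sat M (some 0)
  | .deact φ, _ => φ.sat M none

/-- `M` is a minimal model of `φ` on `v`. -/
def MinModel (M : Config Q) (v : Option ℝ≥0) (φ : TF Q) : Prop :=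
  φ.sat M v ∧ ∀ M' ⊂ M, ¬ φ.sat M' v

/-- The disjuncts of a formula (assumed to be in disjunctive normal form). -/
def TF.disjuncts : TF Q → List (TF Q)
  | .or φ ψ => φ.disjuncts ++ ψ.disjuncts
  | φ => [φ]

/-- The intervals occurring (anywhere) in a transition formula. -/
def TF.guards : TF Q → List NInterval
  | .guard I => [I]
  | .and φ ψ | .or φ ψ => φ.guards ++ ψ.guards
  | .reset φ | .deact φ => φ.guards
  | _ => []

/-! ## One-clock alternating timed automata with deactivation -/

structure OneATA (Q A : Type*) where
  init : Q
  final : Set Q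
  delta : Q → A → Option (TF Q)

/-- `C` is one of the disjuncts of `δ(q,a)`. -/
def OneATA.isTarget (𝒜 : OneATA Q A) (q : Q) (a : A) (C : TF Q) : Prop :=
  ∃ φ, 𝒜.delta q a = some φ ∧ C ∈ φ.disjuncts

/-- Time elapse on a configuration: add `d` to every active value, keep `⊥`. -/
noncomputable def Config.delay (γ : Config Q) (d : ℝ≥0) : Config Q :=
  γ.image (fun s => (s.1, s.2.map (· + d)))

/-- Discrete transition `γ →^{a,C} γ'` where the target `χ` assigns to each
state of `γ` a disjunct of the corresponding transition formula. -/
def OneATA.DStep (𝒜 : OneATA Q A) (γ : Config Q) (a : A)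
    (χ : Q × Option ℝ≥0 → TF Q) (γ' : Config Q) : Prop :=
  (∀ s ∈ γ, 𝒜.isTarget s.1 a (χ s)) ∧
  ∃ Mo : Q × Option ℝ≥0 → Config Q,
    (∀ s ∈ γ, MinModel (Mo s) s.2 (χ s)) ∧ γ' = γ.biUnion Mo

/-- Combined transition `γ →^{d,a,C} γ'`. -/
def OneATA.Step (𝒜 : OneATA Q A) (γ : Config Q) (d : ℝ≥0) (a : A)
    (χ : Q × Option ℝ≥0 → TF Q) (γ' : Config Q) : Prop :=
  𝒜.DStep (γ.delay d) a χ γ'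

/-- A configuration is accepting if all its locations are accepting. -/
def OneATA.AcceptingCfg (𝒜 : OneATA Q A) (γ : Config Q) : Prop :=
  ∀ s ∈ γ, s.1 ∈ 𝒜.final

/-- Accepting runs on (finite) timed words. -/
inductive OneATA.AccRun (𝒜 : OneATA Q A) : Config Q → List (ℝ≥0 × A) → Prop
  | nil {γ} : 𝒜.AcceptingCfg γ → 𝒜.AccRun γ []
  | cons {γ γ' : Config Q} {d : ℝ≥0} {a : A} {w : List (ℝ≥0 × A)}
      (χ : Q × Option ℝ≥0 → TF Q) :
      𝒜.Step γ d a χ γ' → 𝒜.AccRun γ' w → 𝒜.AccRun γ ((d, a) :: w)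

/-- The language of a 1-ATA. -/
def OneATA.Lang (𝒜 : OneATA Q A) : Set (List (ℝ≥0 × A)) :=
  {w | 𝒜.AccRun {(𝒜.init, some 0)} w}

/-- Reachability between configurations by timed and discrete transitions. -/
inductive OneATA.Reach (𝒜 : OneATA Q A) : Config Q → Config Q → Prop
  | refl (γ) : 𝒜.Reach γ γ
  | delay {γ γ'} (d : ℝ≥0) : 𝒜.Reach γ γ' → 𝒜.Reach γ (γ'.delay d)
  | step {γ γ' γ''} (a : A) (χ) : 𝒜.Reach γ γ' → 𝒜.DStep γ' a χ γ'' → 𝒜.Reach γ γ''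

/-- The width of a configuration: the number of active states. -/
noncomputable def Config.width (γ : Config Q) : ℕ :=
  (γ.filter (fun s => s.2 ≠ none)).card

/-- The 1-ATA has width at most `k`. -/
def OneATA.WidthBounded (𝒜 : OneATA Q A) (k : ℕ) : Prop :=
  ∀ γ, 𝒜.Reach {(𝒜.init, some 0)} γ → γ.width ≤ k

/-- All constants appearing in the automaton are at most `M`. -/
def OneATA.BoundedBy (𝒜 : OneATA Q A) (M : ℕ) : Prop :=
  ∀ q a φ, 𝒜.delta q a = some φ → ∀ I ∈ φ.guards, I.bound ≤ M

/-! ## Region equivalence and entailment on configurations -/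

/-- `γ ≃_M γ'` via the bijection `h`. -/
def RegionEquivWith (M : ℕ) (γ γ' : Config Q)
    (h : Q × Option ℝ≥0 → Q × Option ℝ≥0) : Prop :=
  Set.BijOn h ↑γ ↑γ' ∧
  (∀ s ∈ γ, (h s).1 = s.1) ∧
  (∀ s ∈ γ, ((h s).2 = none ↔ s.2 = none)) ∧
  (∀ s ∈ γ, ∀ r r', s.2 = some r → (h s).2 = some r' →
    ((r ≤ (M : ℝ≥0)) ↔ (r' ≤ (M : ℝ≥0))) ∧
    (r ≤ (M : ℝ≥0) →
      (⌊(r : ℝ)⌋ = ⌊(r' : ℝ)⌋ ∧ (Int.fract (r : ℝ) = 0 ↔ Int.fract (r' : ℝ) = 0)))) ∧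
  (∀ s₁ ∈ γ, ∀ s₂ ∈ γ, ∀ r₁ r₂ r₁' r₂',
    s₁.2 = some r₁ → s₂.2 = some r₂ → (h s₁).2 = some r₁' → (h s₂).2 = some r₂' →
    r₁ ≤ (M : ℝ≥0) → r₂ ≤ (M : ℝ≥0) →
    (Int.fract (r₁ : ℝ) ≤ Int.fract (r₂ : ℝ) ↔ Int.fract (r₁' : ℝ) ≤ Int.fract (r₂' : ℝ)))

/-- Region equivalence `γ ≃_M γ'`. -/
def RegionEquiv (M : ℕ) (γ γ' : Config Q) : Prop := ∃ h, RegionEquivWith M γ γ' h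

/-- Configuration entailment `γ ⊨_M γ'` : some subset of `γ'` is region equivalent
to `γ`. -/
def CfgEntails (M : ℕ) (γ γ' : Config Q) : Prop :=
  ∃ γ'' ⊆ γ', RegionEquiv M γ γ''

end BasicDefs


/-! ## MTL (negation normal form) -/

inductive MTL (A : Type*) where
  | atom (a : A)
  | natom (a : A)
  | conj (φ ψ : MTL A)
  | disj (φ ψ : MTL A)
  | next (I : NInterval) (φ : MTL A)
  | untl (I : NInterval) (φ ψ : MTL A)

section MTLDefs

variable {A : Type*}

/-- Accumulated time `Σ_{c=1}^{p} d_c` of the first `p` letters of a timed word. -/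
def twtime (w : List (ℝ≥0 × A)) (p : ℕ) : ℝ≥0 := ((w.take p).map Prod.fst).sum

/-- `(w, i) ⊨ φ` (positions are 0-based). -/
def MTL.holdsAt (w : List (ℝ≥0 × A)) : MTL A → ℕ → Prop
  | .atom a, i => ∃ h : i < w.length, (w.get ⟨i, h⟩).2 = a
  | .natom a, i => ∃ h : i < w.length, (w.get ⟨i, h⟩).2 ≠ a
  | .conj φ ψ, i => φ.holdsAt w i ∧ ψ.holdsAt w i
  | .disj φ ψ, i => φ.holdsAt w i ∨ ψ.holdsAt w i
  | .next I φ, i => ∃ h : i + 1 < w.length, φ.holdsAt w (i + 1) ∧ I.mem (w.get ⟨i + 1, h⟩).1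
  | .untl I φ ψ, i => ∃ k, i ≤ k ∧ k < w.length ∧ ψ.holdsAt w k ∧
      I.mem (twtime w (k + 1) - twtime w (i + 1)) ∧
      ∀ j, i ≤ j → j < k → φ.holdsAt w j

/-- The language of an MTL formula (`w ⊨ φ` iff `φ` holds at the first position). -/
def MTL.Lang (φ : MTL A) : Set (List (ℝ≥0 × A)) := {w | φ.holdsAt w 0}

/-- Pure LTL formulas: every interval is `[0, ∞)`. -/
def MTL.isPure : MTL A → Bool
  | .atom _ | .natom _ => true
  | .conj φ ψ | .disj φ ψ => φ.isPure && ψ.isPure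
  | .next I φ => decide (I = NInterval.ci 0) && φ.isPure
  | .untl I φ ψ => decide (I = NInterval.ci 0) && φ.isPure && ψ.isPure

/-- The subformulas of an MTL formula. -/
def MTL.subfs : MTL A → List (MTL A)
  | .atom a => [.atom a]
  | .natom a => [.natom a]
  | .conj φ ψ => .conj φ ψ :: (φ.subfs ++ ψ.subfs)
  | .disj φ ψ => .disj φ ψ :: (φ.subfs ++ ψ.subfs)
  | .next I φ => .next I φ :: φ.subfs
  | .untl I φ ψ => .untl I φ ψ :: (φ.subfs ++ ψ.subfs)

/-- One-sided MTL: in every Until, the left argument is a pure LTL formula. -/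
def MTL.oneSided : MTL A → Prop
  | .atom _ | .natom _ => True
  | .conj φ ψ | .disj φ ψ => φ.oneSided ∧ ψ.oneSided
  | .next _ φ => φ.oneSided
  | .untl _ φ ψ => φ.isPure = true ∧ ψ.oneSided

/-! ## The MTL-to-1-ATA construction with deactivation -/

/-- Locations of the constructed automaton: the initial location `φ_init`,
locations for formulas (in particular Until subformulas and `φ` itself), and
locations `(X_I ψ)ʳ`. -/
inductive MLoc (A : Type*) where
  | start
  | form (ψ : MTL A)
  | nextr (I : NInterval) (ψ : MTL A)

/-- Prefix `x̄.` if `ψ` is pure LTL, and nothing otherwise. -/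
def barP (ψ : MTL A) (φ : TF (MLoc A)) : TF (MLoc A) :=
  if ψ.isPure then .deact φ else φ

/-- Prefix `x̄.` if `ψ` is pure LTL, and `x.` otherwise. -/
def rhoP (ψ : MTL A) (φ : TF (MLoc A)) : TF (MLoc A) :=
  if ψ.isPure then .deact φ else .reset φ

variable [DecidableEq A]

/-- The transition formula `δ(ψ, a)` for subformulas `ψ`. -/
def dform : MTL A → A → TF (MLoc A)
  | .atom b, a => if b = a then .tt else .ff
  | .natom b, a => if b = a then .ff else .tt
  | .conj φ ψ, a => .and (barP φ (dform φ a)) (barP ψ (dform ψ a))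
  | .disj φ ψ, a => .or (barP φ (dform φ a)) (barP ψ (dform ψ a))
  | .next I ψ, _ => .reset (.loc (.nextr I ψ))
  | .untl I φ ψ, a =>
      .or (.and (rhoP ψ (dform ψ a)) (.guard I))
          (.and (rhoP φ (dform φ a)) (.loc (.form (.untl I φ ψ))))

/-- The transition function of the constructed automaton `A'_φ`. -/
def mlocDelta (φ₀ : MTL A) : MLoc A → A → Option (TF (MLoc A))
  | .start, a => some (rhoP φ₀ (dform φ₀ a))
  | .form ψ, a => some (dform ψ a)
  | .nextr I ψ, a => some (.and (.guard I) (rhoP ψ (dform ψ a)))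

/-- The 1-ATA `A'_φ` constructed from an MTL formula `φ`:
initial location `φ_init`, no accepting locations. -/
def ataOf (φ : MTL A) : OneATA (MLoc A) A :=
  { init := .start, final := ∅, delta := mlocDelta φ }

end MTLDefs

section KB
variable {A : Type*}
/-- The recursive width bound `k_ψ`. -/
def kBound : MTL A → ℕ
  | .atom _ | .natom _ => 1
  | .conj φ ψ => if (MTL.conj φ ψ).isPure then 1 else kBound φ + kBound ψ
  | .disj φ ψ => if (MTL.disj φ ψ).isPure then 1 else max (kBound φ) (kBound ψ)
  | .next I φ => if (MTL.next I φ).isPure then 1 else kBound φ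
  | .untl I φ ψ => if (MTL.untl I φ ψ).isPure then 1 else kBound ψ
end KB


/-! ## Zones (variables `x_{q,i}`), nodes and their configuration semantics -/

section ZoneDefs

variable {Q A : Type*}

/-- A (semantic) zone: a finite set of variables `x_{q,i}` together with the
set of valuations satisfying its constraints. -/
structure SemZone (Q : Type*) where
  vars : Finset (Q × ℕ)
  val : ((Q × ℕ) → ℝ≥0) → Prop

/-- `γ` satisfies the node `(Z, IA)` via the surjection `h`. -/
def NodeSatVia (Z : SemZone Q) (IA : Finset (Q × ℕ)) (γ : Config Q)
    (h : Q × ℕ → Q × Option ℝ≥0) : Prop :=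
  (∀ y ∈ Z.vars ∪ IA, (h y).1 = y.1) ∧
  (∀ y ∈ Z.vars ∪ IA, h y ∈ γ) ∧
  (∀ s ∈ γ, ∃ y ∈ Z.vars ∪ IA, h y = s) ∧
  (∀ y ∈ IA, (h y).2 = none) ∧
  ∃ ν : (Q × ℕ) → ℝ≥0, (∀ y ∈ Z.vars, (h y).2 = some (ν y)) ∧ Z.val ν

/-- `γ ∈ ⟦(Z, IA)⟧`. -/
def NodeSat (Z : SemZone Q) (IA : Finset (Q × ℕ)) (γ : Config Q) : Prop :=
  ∃ h, NodeSatVia Z IA γ h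

/-- The special empty node `(Z_∅, {})`, satisfied exactly by the empty
configuration. -/
def emptySemZone {Q : Type*} : SemZone Q := ⟨∅, fun _ => True⟩

/-- The initial node `((x_{q₀,1} = 0), ∅)`. -/
def initSemZone (𝒜 : OneATA Q A) : SemZone Q :=
  ⟨{(𝒜.init, 1)}, fun ν => ν (𝒜.init, 1) = 0⟩

/-! ### Simple clauses and the successor computation -/

/-- A clause is a conjunction of atoms of the form `true`, `false`, `q`, `I`,
`x.q`, `x̄.q`. -/
def TF.isSimpleConj : TF Q → Bool
  | .tt => true
  | .ff => true
  | .loc _ => true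
  | .guard _ => true
  | .reset (.loc _) => true
  | .deact (.loc _) => true
  | .and φ ψ => φ.isSimpleConj && ψ.isSimpleConj
  | _ => false

/-- Every transition formula of the automaton is in disjunctive normal form. -/
def OneATA.normalized (𝒜 : OneATA Q A) : Prop :=
  ∀ q a φ, 𝒜.delta q a = some φ → ∀ C ∈ φ.disjuncts, C.isSimpleConj = true

/-- The interval atoms of a clause. -/
def TF.topGuards : TF Q → List NInterval
  | .guard I => [I]
  | .and φ ψ => φ.topGuards ++ ψ.topGuards
  | _ => []

/-- The location atoms `q` of a clause. -/
def TF.atomLocs : TF Q → List Q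
  | .loc q => [q]
  | .and φ ψ => φ.atomLocs ++ ψ.atomLocs
  | _ => []

/-- The reset atoms `x.q` of a clause. -/
def TF.resetLocs : TF Q → List Q
  | .reset (.loc q) => [q]
  | .and φ ψ => φ.resetLocs ++ ψ.resetLocs
  | _ => []

/-- The deactivation atoms `x̄.q` of a clause. -/
def TF.deactLocs : TF Q → List Q
  | .deact (.loc q) => [q]
  | .and φ ψ => φ.deactLocs ++ ψ.deactLocs
  | _ => []

/-- The inactive variable set of the successor node: `x'_{q,0}` for every atom
`x̄.q`, and for every atom `q` of a clause of an inactive variable. -/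
noncomputable def succIA (Z : SemZone Q) (IA : Finset (Q × ℕ))
    (T : Q × ℕ → TF Q) : Finset (Q × ℕ) :=
  ((Z.vars ∪ IA).biUnion fun y => ((T y).deactLocs.toFinset).image fun q => (q, 0)) ∪
  (IA.biUnion fun y => ((T y).atomLocs.toFinset).image fun q => (q, 0))

/-- Number of active variables whose clause contains the atom `q`. -/
noncomputable def copyCount (Z : SemZone Q) (T : Q × ℕ → TF Q) (q : Q) : ℕ :=
  (Z.vars.filter fun y => q ∈ (T y).atomLocs).card

/-- The active variable set of the successor node: `x'_{q,1}` for resets, and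
fresh variables `x'_{q,ℓ}` with `2 ≤ ℓ` (smallest free indices) for atoms `q`
of clauses of active variables. -/
noncomputable def succVars (Z : SemZone Q) (IA : Finset (Q × ℕ))
    (T : Q × ℕ → TF Q) : Finset (Q × ℕ) :=
  (((Z.vars ∪ IA).biUnion fun y => (T y).resetLocs.toFinset).image fun q => (q, 1)) ∪
  ((Z.vars.biUnion fun y => (T y).atomLocs.toFinset).biUnion fun q =>
    (Finset.Icc 2 (copyCount Z T q + 1)).image fun i => (q, i))

/-- The successor computation on nodes:  time elapse, guard intersection,
reset/deactivation with fresh variables, and renaming (canonicalization is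
semantically transparent).  `T` assigns to every variable of the node a
disjunct of the transition formula of its location on the letter `a`.  If a
chosen disjunct is `false`, the target is discarded; if all chosen disjuncts
are `true`, the successor is the special empty node. -/
def Succ (𝒜 : OneATA Q A) (Z : SemZone Q) (IA : Finset (Q × ℕ)) (a : A)
    (T : Q × ℕ → TF Q) (Z' : SemZone Q) (IA' : Finset (Q × ℕ)) : Prop :=
  (∀ y ∈ Z.vars ∪ IA, 𝒜.isTarget y.1 a (T y)) ∧
  (∀ y ∈ Z.vars ∪ IA, T y ≠ TF.ff) ∧
  ((∀ y ∈ Z.vars ∪ IA, T y = TF.tt) → (Z' = emptySemZone ∧ IA' = ∅)) ∧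
  ((¬ ∀ y ∈ Z.vars ∪ IA, T y = TF.tt) →
    IA' = succIA Z IA T ∧
    Z'.vars = succVars Z IA T ∧
    ∃ g : (Q × ℕ) → Q → ℕ,
      (∀ y ∈ Z.vars, ∀ q ∈ (T y).atomLocs, 2 ≤ g y q ∧ g y q ≤ copyCount Z T q + 1) ∧
      (∀ y₁ ∈ Z.vars, ∀ y₂ ∈ Z.vars, ∀ q, q ∈ (T y₁).atomLocs → q ∈ (T y₂).atomLocs →
        g y₁ q = g y₂ q → y₁ = y₂) ∧
      Z'.val = fun ν' => ∃ (ν : (Q × ℕ) → ℝ≥0) (d : ℝ≥0), Z.val ν ∧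
        (∀ y ∈ Z.vars, ∀ I ∈ (T y).topGuards, I.mem (ν y + d)) ∧
        (∀ y ∈ Z.vars ∪ IA, ∀ q ∈ (T y).resetLocs, ν' (q, 1) = 0) ∧
        (∀ y ∈ Z.vars, ∀ q ∈ (T y).atomLocs, ν' (q, g y q) = ν y + d))

/-- Time elapse on a single state. -/
noncomputable def stDelay (s : Q × Option ℝ≥0) (d : ℝ≥0) : Q × Option ℝ≥0 :=
  (s.1, s.2.map (· + d))

/-- `γ →^{d,a,(C₁,…,C_m)} γ'` where the disjuncts chosen in the step correspond,
via a surjection witnessing `γ ∈ ⟦(Z,IA)⟧`, to the target tuple `T` of the node. -/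
def StepMatching (𝒜 : OneATA Q A) (Z : SemZone Q) (IA : Finset (Q × ℕ))
    (γ : Config Q) (d : ℝ≥0) (a : A) (T : Q × ℕ → TF Q) (γ' : Config Q) : Prop :=
  ∃ h χ, NodeSatVia Z IA γ h ∧
    (∀ y ∈ Z.vars ∪ IA, χ (stDelay (h y) d) = T y) ∧
    𝒜.Step γ d a χ γ'

/-- Reachability in the zone graph. -/
inductive ZReach (𝒜 : OneATA Q A) :
    SemZone Q × Finset (Q × ℕ) → SemZone Q × Finset (Q × ℕ) → Prop
  | refl (n) : ZReach 𝒜 n n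
  | step {n₁ n₂ n₃} (a : A) (T) :
      ZReach 𝒜 n₁ n₂ → Succ 𝒜 n₂.1 n₂.2 a T n₃.1 n₃.2 → ZReach 𝒜 n₁ n₃

/-- A node is accepting if the locations of all its variables are accepting. -/
def AccNode (𝒜 : OneATA Q A) (Z : SemZone Q) (IA : Finset (Q × ℕ)) : Prop :=
  ∀ y ∈ Z.vars ∪ IA, y.1 ∈ 𝒜.final

/-! ### Entailment between nodes -/

/-- Node entailment `(Z,IA) ⊨_M (Z',IA')`. -/
def NodeEntails (M : ℕ) (Z : SemZone Q) (IA : Finset (Q × ℕ))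
    (Z' : SemZone Q) (IA' : Finset (Q × ℕ)) : Prop :=
  ∀ γ', NodeSat Z' IA' γ' → ∃ γ, NodeSat Z IA γ ∧ CfgEntails M γ γ'

/-- Classical region equivalence between valuations over the variable set `V`. -/
def ValRegEquiv (M : ℕ) (V : Finset (Q × ℕ)) (u u' : (Q × ℕ) → ℝ≥0) : Prop :=
  (∀ y ∈ V, ((u y ≤ (M : ℝ≥0)) ↔ (u' y ≤ (M : ℝ≥0))) ∧
    (u y ≤ (M : ℝ≥0) →
      (⌊(u y : ℝ)⌋ = ⌊(u' y : ℝ)⌋ ∧ (Int.fract (u y : ℝ) = 0 ↔ Int.fract (u' y : ℝ) = 0)))) ∧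
  (∀ y ∈ V, ∀ z ∈ V, u y ≤ (M : ℝ≥0) → u z ≤ (M : ℝ≥0) →
    (Int.fract (u y : ℝ) ≤ Int.fract (u z : ℝ) ↔
      Int.fract (u' y : ℝ) ≤ Int.fract (u' z : ℝ)))

/-- The bounded entailment check `(Z,IA) ⊨ᵇ_M (Z',IA')`, for zones over the same
variables, using the identity correspondence of variables. -/
def BoundedEntails (M : ℕ) (Z : SemZone Q) (IA : Finset (Q × ℕ))
    (Z' : SemZone Q) (IA' : Finset (Q × ℕ)) : Prop :=
  IA ⊆ IA' ∧ ∀ u', Z'.val u' → ∃ u, Z.val u ∧ ValRegEquiv M Z.vars u u'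

/-! ### Syntactic zones -/

/-- Comparison relations in zone constraints. -/
inductive ZRel | lt | le | gt | ge

def ZRel.holds : ZRel → ℝ → ℝ → Prop
  | .lt, x, y => x < y
  | .le, x, y => x ≤ y
  | .gt, x, y => x > y
  | .ge, x, y => x ≥ y

/-- A zone constraint: `y ∼ k` or `y − x ∼ k` with `k ∈ ℤ`. -/
inductive ZConstr (Q : Type*) where
  | single (y : Q × ℕ) (r : ZRel) (k : ℤ)
  | diff (y x : Q × ℕ) (r : ZRel) (k : ℤ)

def ZConstr.holds (ν : (Q × ℕ) → ℝ≥0) : ZConstr Q → Prop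
  | .single y r k => r.holds (ν y : ℝ) (k : ℝ)
  | .diff y x r k => r.holds ((ν y : ℝ) - (ν x : ℝ)) (k : ℝ)

/-- The variables occurring in a constraint. -/
def ZConstr.varsIn : ZConstr Q → List (Q × ℕ)
  | .single y _ _ => [y]
  | .diff y x _ _ => [y, x]

/-- A (syntactic) zone: a finite set of variables and a finite conjunction of
constraints. -/
structure Zone (Q : Type*) where
  vars : Finset (Q × ℕ)
  constrs : List (ZConstr Q)

def Zone.satBy (Z : Zone Q) (ν : (Q × ℕ) → ℝ≥0) : Prop :=
  ∀ c ∈ Z.constrs, c.holds ν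

/-- Constraints only mention variables of the zone. -/
def Zone.wf (Z : Zone Q) : Prop :=
  ∀ c ∈ Z.constrs, ∀ v ∈ c.varsIn, v ∈ Z.vars

/-- The semantic zone of a syntactic zone. -/
def Zone.toSem (Z : Zone Q) : SemZone Q := ⟨Z.vars, Z.satBy⟩

/-! ### The `N'_r` sets for the entailment check -/

/-- Location preserving one-to-one mapping from `Var(Z)` to `Var(Z')`. -/
def LocPresInj (Z Z' : Zone Q) (r : Q × ℕ → Q × ℕ) : Prop :=
  Set.InjOn r ↑Z.vars ∧ (∀ y ∈ Z.vars, r y ∈ Z'.vars) ∧ ∀ y ∈ Z.vars, (r y).1 = y.1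

/-- `γ' ∈ N'_r` : `γ'` satisfies `(Z', IA')` via a surjection whose induced
valuation, transported back along `r`, is region equivalent to no valuation
satisfying `Z`. -/
def InNr (M : ℕ) (Z Z' : Zone Q) (IA' : Finset (Q × ℕ))
    (r : Q × ℕ → Q × ℕ) (γ' : Config Q) : Prop :=
  ∃ (h' : Q × ℕ → Q × Option ℝ≥0) (ν' : (Q × ℕ) → ℝ≥0),
    (∀ y ∈ Z'.vars ∪ IA', (h' y).1 = y.1) ∧
    (∀ y ∈ Z'.vars ∪ IA', h' y ∈ γ') ∧
    (∀ s ∈ γ', ∃ y ∈ Z'.vars ∪ IA', h' y = s) ∧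
    (∀ y ∈ IA', (h' y).2 = none) ∧
    (∀ y ∈ Z'.vars, (h' y).2 = some (ν' y)) ∧
    Z'.satBy ν' ∧
    ∀ ν, Z.satBy ν → ¬ ValRegEquiv M Z.vars ν (fun y => ν' (r y))

end ZoneDefs


/-! ## The zones `Z_φ` and `Z'_φ` constructed from a monotone 3-CNF formula -/

/-- The two locations `q_x` and `q_y`. -/
inductive XY | qx | qy
deriving DecidableEq

/-- The zone variables used in the reduction, for a formula with `m` clauses:
`px_j, py_j, nx_j, ny_j` (dummy clauses), `x^i_j, y^i_j` (clause literals) for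
`Z'_φ`, and `x⁺_j, y⁺_j, x⁻_j, y⁻_j` for `Z_φ`. -/
inductive MVar (m : ℕ) where
  | px (j : Fin 3)
  | py (j : Fin 3)
  | nx (j : Fin 3)
  | ny (j : Fin 3)
  | xc (i : Fin m) (j : Fin 3)
  | yc (i : Fin m) (j : Fin 3)
  | xp (j : Fin 3)
  | yp (j : Fin 3)
  | xm (j : Fin 3)
  | ym (j : Fin 3)
deriving DecidableEq

section Mono

variable {m : ℕ}

/-- The location of each variable. -/
def MVar.loc : MVar m → XY
  | .px _ | .nx _ | .xc _ _ | .xp _ | .xm _ => .qx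
  | .py _ | .ny _ | .yc _ _ | .yp _ | .ym _ => .qy

def MVar.inZ : MVar m → Prop
  | .xp _ | .yp _ | .xm _ | .ym _ => True
  | _ => False

/-- The variables of `Z_φ`. -/
def ZVars (m : ℕ) : Set (MVar m) := {y | y.inZ}

/-- The variables of `Z'_φ`. -/
def Z'Vars (m : ℕ) : Set (MVar m) := {y | ¬ y.inZ}

/-- `γ` satisfies the node `(Z, ∅)` (zone given semantically by the predicate
`P` on valuations, over the variable set `V`) via the surjection `h`. -/
def MSat (V : Set (MVar m)) (P : (MVar m → ℝ≥0) → Prop) (γ : Config XY)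
    (h : MVar m → XY × Option ℝ≥0) : Prop :=
  (∀ y ∈ V, (h y).1 = y.loc) ∧
  (∀ y ∈ V, h y ∈ γ) ∧
  (∀ s ∈ γ, ∃ y ∈ V, h y = s) ∧
  ∃ ν : MVar m → ℝ≥0, (∀ y ∈ V, (h y).2 = some (ν y)) ∧ P ν

/-- The constraints of the zone `Z_φ` (with `k` positive clauses and `m`
clauses in total). -/
def ZphiSat (m k : ℕ) (ν : MVar m → ℝ≥0) : Prop :=
  (∀ j : Fin 3, 0 ≤ (ν (.yp j) : ℝ) - ν (.xp j) ∧ (ν (.yp j) : ℝ) - ν (.xp j) ≤ 1) ∧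
  (∀ j : Fin 3, 1 < (ν (.ym j) : ℝ) - ν (.xm j) ∧ (ν (.ym j) : ℝ) - ν (.xm j) ≤ 2) ∧
  (∀ j : Fin 2, 1 ≤ (ν (.xp j.succ) : ℝ) - ν (.yp j.castSucc) ∧
      (ν (.xp j.succ) : ℝ) - ν (.yp j.castSucc) ≤ 5) ∧
  (∀ j : Fin 2, 1 ≤ (ν (.xm j.succ) : ℝ) - ν (.ym j.castSucc) ∧
      (ν (.xm j.succ) : ℝ) - ν (.ym j.castSucc) ≤ 5) ∧
  ((ν (.yp 2) : ℝ) < 14 * ((k : ℝ) + 1) - 2) ∧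
  ((ν (.xm 0) : ℝ) > 14 * ((k : ℝ) + 1) - 2) ∧
  ((ν (.ym 2) : ℝ) - ν (.xp 0) < 14 * ((m : ℝ) + 2) - 6)

/-- The constraints of the zone `Z'_φ`, for a monotone 3-CNF formula whose
`i`-th clause has literals on the propositional variables `lits i 0`,
`lits i 1`, `lits i 2`. -/
def Z'phiSat (m : ℕ) {PV : Type*} (lits : Fin m → Fin 3 → PV)
    (ν : MVar m → ℝ≥0) : Prop :=
  (∀ j : Fin 3, (ν (.px j) : ℝ) = 3 * (j : ℕ) ∧ (ν (.py j) : ℝ) = 3 * (j : ℕ)) ∧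
  (∀ j : Fin 3, (ν (.nx j) : ℝ) = 14 * ((m : ℝ) + 1) + 3 * (j : ℕ) ∧
      (ν (.ny j) : ℝ) = 14 * ((m : ℝ) + 1) + 3 * (j : ℕ) + 2) ∧
  (∀ (i : Fin m) (j : Fin 3),
      14 * ((i : ℕ) + 1 : ℝ) + 3 * (j : ℕ) ≤ (ν (.xc i j) : ℝ) ∧
      (ν (.xc i j) : ℝ) ≤ 14 * ((i : ℕ) + 1 : ℝ) + 3 * (j : ℕ) + 2 ∧
      14 * ((i : ℕ) + 1 : ℝ) + 3 * (j : ℕ) ≤ (ν (.yc i j) : ℝ) ∧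
      (ν (.yc i j) : ℝ) ≤ 14 * ((i : ℕ) + 1 : ℝ) + 3 * (j : ℕ) + 2 ∧
      (ν (.xc i j) : ℝ) ≤ (ν (.yc i j) : ℝ)) ∧
  (∀ (i i' : Fin m) (j j' : Fin 3), lits i j = lits i' j' →
      (ν (.xc i' j') : ℝ) - ν (.xc i j) = 14 * (((i' : ℕ) : ℝ) - ((i : ℕ) : ℝ)) +
        3 * (((j' : ℕ) : ℝ) - ((j : ℕ) : ℝ)) ∧
      (ν (.yc i' j') : ℝ) - ν (.yc i j) = 14 * (((i' : ℕ) : ℝ) - ((i : ℕ) : ℝ)) +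
        3 * (((j' : ℕ) : ℝ) - ((j : ℕ) : ℝ)))

/-- The (real) value of a state of a configuration. -/
noncomputable def sval (s : XY × Option ℝ≥0) : ℝ := ((s.2.getD 0 : ℝ≥0) : ℝ)

/-- The assignment `α_{γ'}` extracted from a surjection `h'` witnessing that a
configuration satisfies `(Z'_φ, ∅)`: a propositional variable is true iff the
difference `y − x` of (one of) its literal occurrences exceeds 1. -/
def alphaOf {PV : Type*} (lits : Fin m → Fin 3 → PV)
    (h' : MVar m → XY × Option ℝ≥0) (p : PV) : Prop :=
  ∃ (i : Fin m) (j : Fin 3), lits i j = p ∧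
    1 < sval (h' (.yc i j)) - sval (h' (.xc i j))

/-- The assignment `α` falsifies clause `C_i` (clauses `C_1, …, C_k` are
positive, the rest negative): all of its literals are false. -/
def Falsifies {PV : Type*} (k : ℕ) (lits : Fin m → Fin 3 → PV)
    (α : PV → Prop) (i : Fin m) : Prop :=
  if (i : ℕ) < k then ∀ j : Fin 3, ¬ α (lits i j) else ∀ j : Fin 3, α (lits i j)

/-- The monotone 3-CNF formula is satisfiable. -/
def MonoSatisfiable {PV : Type*} (k : ℕ) (lits : Fin m → Fin 3 → PV) : Prop :=
  ∃ α : PV → Prop, ∀ i : Fin m, ¬ Falsifies k lits α i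

end Mono



/-! ## Auxiliary lemmas for Statement 16 -/

private lemma fin3_cases : ∀ p0 p1 p2 : Fin 3, p0 ≠ p1 → p0 ≠ p2 → p1 ≠ p2 →
    ∀ j : Fin 3, j = p0 ∨ j = p1 ∨ j = p2 := by decide

section Aux

variable {m : ℕ} {PV : Type*} {lits : Fin m → Fin 3 → PV} {ν' : MVar m → ℝ≥0}

lemma classifyX (hZ' : Z'phiSat m lits ν') (z : MVar m) (hz : ¬ z.inZ)
    (hl : z.loc = XY.qx) :
    (∃ p : Fin 3, z = .px p ∧ (ν' z : ℝ) = 3 * ((p : ℕ) : ℝ)) ∨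
    (∃ (i : Fin m) (p : Fin 3), z = .xc i p ∧
      14 * (((i : ℕ) : ℝ) + 1) + 3 * ((p : ℕ) : ℝ) ≤ (ν' z : ℝ) ∧
      (ν' z : ℝ) ≤ 14 * (((i : ℕ) : ℝ) + 1) + 3 * ((p : ℕ) : ℝ) + 2) ∨
    (∃ p : Fin 3, z = .nx p ∧ (ν' z : ℝ) = 14 * ((m : ℝ) + 1) + 3 * ((p : ℕ) : ℝ)) := by
  cases z with
  | px p => exact Or.inl ⟨p, rfl, (hZ'.1 p).1⟩
  | py p => simp [MVar.loc] at hl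
  | nx p => exact Or.inr (Or.inr ⟨p, rfl, (hZ'.2.1 p).1⟩)
  | ny p => simp [MVar.loc] at hl
  | xc i p => exact Or.inr (Or.inl ⟨i, p, rfl, (hZ'.2.2.1 i p).1, (hZ'.2.2.1 i p).2.1⟩)
  | yc i p => simp [MVar.loc] at hl
  | xp p => exact absurd trivial hz
  | yp p => simp [MVar.loc] at hl
  | xm p => exact absurd trivial hz
  | ym p => simp [MVar.loc] at hl

lemma classifyY (hZ' : Z'phiSat m lits ν') (z : MVar m) (hz : ¬ z.inZ)
    (hl : z.loc = XY.qy) :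
    (∃ p : Fin 3, z = .py p ∧ (ν' z : ℝ) = 3 * ((p : ℕ) : ℝ)) ∨
    (∃ (i : Fin m) (p : Fin 3), z = .yc i p ∧
      14 * (((i : ℕ) : ℝ) + 1) + 3 * ((p : ℕ) : ℝ) ≤ (ν' z : ℝ) ∧
      (ν' z : ℝ) ≤ 14 * (((i : ℕ) : ℝ) + 1) + 3 * ((p : ℕ) : ℝ) + 2) ∨
    (∃ p : Fin 3, z = .ny p ∧
      (ν' z : ℝ) = 14 * ((m : ℝ) + 1) + 3 * ((p : ℕ) : ℝ) + 2) := by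
  cases z with
  | px p => simp [MVar.loc] at hl
  | py p => exact Or.inl ⟨p, rfl, (hZ'.1 p).2⟩
  | nx p => simp [MVar.loc] at hl
  | ny p => exact Or.inr (Or.inr ⟨p, rfl, (hZ'.2.1 p).2⟩)
  | xc i p => simp [MVar.loc] at hl
  | yc i p =>
      exact Or.inr (Or.inl ⟨i, p, rfl, (hZ'.2.2.1 i p).2.2.1, (hZ'.2.2.1 i p).2.2.2.1⟩)
  | xp p => simp [MVar.loc] at hl
  | yp p => exact absurd trivial hz
  | xm p => simp [MVar.loc] at hl
  | ym p => exact absurd trivial hz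

lemma pairY (hZ' : Z'phiSat m lits ν') (i : Fin m) (p : Fin 3) (a b : ℝ)
    (ha1 : 14 * (((i : ℕ) : ℝ) + 1) + 3 * ((p : ℕ) : ℝ) ≤ a)
    (ha2 : a ≤ 14 * (((i : ℕ) : ℝ) + 1) + 3 * ((p : ℕ) : ℝ) + 2)
    (w : MVar m) (hwi : ¬ w.inZ) (hwl : w.loc = XY.qy) (hvb : (ν' w : ℝ) = b)
    (h1 : a ≤ b) (h2 : b ≤ a + 2) :
    ∃ q : Fin 3, w = .yc i q ∧
      14 * (((i : ℕ) : ℝ) + 1) + 3 * ((q : ℕ) : ℝ) ≤ b ∧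
      b ≤ 14 * (((i : ℕ) : ℝ) + 1) + 3 * ((q : ℕ) : ℝ) + 2 := by
  have him0 : (i : ℕ) + 1 ≤ m := i.isLt
  have him : ((i : ℕ) : ℝ) + 1 ≤ (m : ℝ) := by exact_mod_cast him0
  have hp2 : ((p : ℕ) : ℝ) ≤ 2 := by exact_mod_cast p.is_le
  have hi0 : (0 : ℝ) ≤ ((i : ℕ) : ℝ) := Nat.cast_nonneg _
  have hp0 : (0 : ℝ) ≤ ((p : ℕ) : ℝ) := Nat.cast_nonneg _
  rcases classifyY hZ' w hwi hwl with ⟨q, he, hv⟩ | ⟨i', q, he, lo, hi⟩ | ⟨q, he, hv⟩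
  · exfalso
    have hq2 : ((q : ℕ) : ℝ) ≤ 2 := by exact_mod_cast q.is_le
    rw [hvb] at hv; linarith
  · rw [hvb] at lo hi
    have hq2 : ((q : ℕ) : ℝ) ≤ 2 := by exact_mod_cast q.is_le
    have hii : (i' : ℕ) = (i : ℕ) := by
      have h1n : 14 * (i' : ℕ) + 3 * (q : ℕ) ≤ 14 * (i : ℕ) + 3 * (p : ℕ) + 4 := by
        exact_mod_cast (show (14 * ((i' : ℕ) : ℝ) + 3 * ((q : ℕ) : ℝ) : ℝ) ≤
          14 * ((i : ℕ) : ℝ) + 3 * ((p : ℕ) : ℝ) + 4 by linarith)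
      have h2n : 14 * (i : ℕ) + 3 * (p : ℕ) ≤ 14 * (i' : ℕ) + 3 * (q : ℕ) + 2 := by
        exact_mod_cast (show (14 * ((i : ℕ) : ℝ) + 3 * ((p : ℕ) : ℝ) : ℝ) ≤
          14 * ((i' : ℕ) : ℝ) + 3 * ((q : ℕ) : ℝ) + 2 by linarith)
      have hqn : (q : ℕ) ≤ 2 := q.is_le
      have hpn : (p : ℕ) ≤ 2 := p.is_le
      omega
    have hie : i' = i := Fin.val_injective hii
    subst hie
    exact ⟨q, he, lo, hi⟩
  · exfalso
    have hq0 : (0 : ℝ) ≤ ((q : ℕ) : ℝ) := Nat.cast_nonneg _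
    rw [hvb] at hv; linarith

lemma pairX (hZ' : Z'phiSat m lits ν') (i : Fin m) (q : Fin 3) (b a' : ℝ)
    (hb1 : 14 * (((i : ℕ) : ℝ) + 1) + 3 * ((q : ℕ) : ℝ) ≤ b)
    (hb2 : b ≤ 14 * (((i : ℕ) : ℝ) + 1) + 3 * ((q : ℕ) : ℝ) + 2)
    (z : MVar m) (hzi : ¬ z.inZ) (hzl : z.loc = XY.qx) (hva : (ν' z : ℝ) = a')
    (h1 : b + 1 ≤ a') (h2 : a' ≤ b + 5) :
    ∃ p : Fin 3, z = .xc i p ∧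
      14 * (((i : ℕ) : ℝ) + 1) + 3 * ((p : ℕ) : ℝ) ≤ a' ∧
      a' ≤ 14 * (((i : ℕ) : ℝ) + 1) + 3 * ((p : ℕ) : ℝ) + 2 := by
  have him0 : (i : ℕ) + 1 ≤ m := i.isLt
  have him : ((i : ℕ) : ℝ) + 1 ≤ (m : ℝ) := by exact_mod_cast him0
  have hq2 : ((q : ℕ) : ℝ) ≤ 2 := by exact_mod_cast q.is_le
  have hi0 : (0 : ℝ) ≤ ((i : ℕ) : ℝ) := Nat.cast_nonneg _
  have hq0 : (0 : ℝ) ≤ ((q : ℕ) : ℝ) := Nat.cast_nonneg _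
  rcases classifyX hZ' z hzi hzl with ⟨p, he, hv⟩ | ⟨i', p, he, lo, hi⟩ | ⟨p, he, hv⟩
  · exfalso
    have hp2 : ((p : ℕ) : ℝ) ≤ 2 := by exact_mod_cast p.is_le
    rw [hva] at hv; linarith
  · rw [hva] at lo hi
    have hp2 : ((p : ℕ) : ℝ) ≤ 2 := by exact_mod_cast p.is_le
    have hii : (i' : ℕ) = (i : ℕ) := by
      have h1n : 14 * (i' : ℕ) + 3 * (p : ℕ) ≤ 14 * (i : ℕ) + 3 * (q : ℕ) + 7 := by
        exact_mod_cast (show (14 * ((i' : ℕ) : ℝ) + 3 * ((p : ℕ) : ℝ) : ℝ) ≤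
          14 * ((i : ℕ) : ℝ) + 3 * ((q : ℕ) : ℝ) + 7 by linarith)
      have h2n : 14 * (i : ℕ) + 3 * (q : ℕ) ≤ 14 * (i' : ℕ) + 3 * (p : ℕ) + 1 := by
        exact_mod_cast (show (14 * ((i : ℕ) : ℝ) + 3 * ((q : ℕ) : ℝ) : ℝ) ≤
          14 * ((i' : ℕ) : ℝ) + 3 * ((p : ℕ) : ℝ) + 1 by linarith)
      have hqn : (q : ℕ) ≤ 2 := q.is_le
      have hpn : (p : ℕ) ≤ 2 := p.is_le
      omega
    have hie : i' = i := Fin.val_injective hii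
    subst hie
    exact ⟨p, he, lo, hi⟩
  · exfalso
    have hp0 : (0 : ℝ) ≤ ((p : ℕ) : ℝ) := Nat.cast_nonneg _
    rw [hva] at hv; linarith

lemma clauseChain (hZ' : Z'phiSat m lits ν')
    (z0 z1 z2 w0 w1 w2 : MVar m)
    (hz1i : ¬ z1.inZ) (hz2i : ¬ z2.inZ)
    (hw0i : ¬ w0.inZ) (hw1i : ¬ w1.inZ) (hw2i : ¬ w2.inZ)
    (hz1l : z1.loc = XY.qx) (hz2l : z2.loc = XY.qx)
    (hw0l : w0.loc = XY.qy) (hw1l : w1.loc = XY.qy) (hw2l : w2.loc = XY.qy)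
    (a0 a1 a2 b0 b1 b2 : ℝ)
    (hva0 : (ν' z0 : ℝ) = a0) (hva1 : (ν' z1 : ℝ) = a1) (hva2 : (ν' z2 : ℝ) = a2)
    (hvb0 : (ν' w0 : ℝ) = b0) (hvb1 : (ν' w1 : ℝ) = b1) (hvb2 : (ν' w2 : ℝ) = b2)
    (hab0 : a0 ≤ b0) (hab0' : b0 ≤ a0 + 2)
    (hab1 : a1 ≤ b1) (hab1' : b1 ≤ a1 + 2)
    (hab2 : a2 ≤ b2) (hab2' : b2 ≤ a2 + 2)
    (hg0 : b0 + 1 ≤ a1) (hg0' : a1 ≤ b0 + 5)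
    (hg1 : b1 + 1 ≤ a2) (hg1' : a2 ≤ b1 + 5)
    (i0 : Fin m) (p0 : Fin 3) (hz0 : z0 = .xc i0 p0) :
    ∃ i : Fin m, ∀ j : Fin 3,
      (z0 = .xc i j ∨ z1 = .xc i j ∨ z2 = .xc i j) ∧
      (w0 = .yc i j ∨ w1 = .yc i j ∨ w2 = .yc i j) := by
  have ha0l : 14 * (((i0 : ℕ) : ℝ) + 1) + 3 * ((p0 : ℕ) : ℝ) ≤ a0 := by
    rw [← hva0, hz0]; exact (hZ'.2.2.1 i0 p0).1
  have ha0u : a0 ≤ 14 * (((i0 : ℕ) : ℝ) + 1) + 3 * ((p0 : ℕ) : ℝ) + 2 := by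
    rw [← hva0, hz0]; exact (hZ'.2.2.1 i0 p0).2.1
  obtain ⟨q0, hw0, hb0l, hb0u⟩ :=
    pairY hZ' i0 p0 a0 b0 ha0l ha0u w0 hw0i hw0l hvb0 hab0 hab0'
  obtain ⟨p1, hz1, ha1l, ha1u⟩ :=
    pairX hZ' i0 q0 b0 a1 hb0l hb0u z1 hz1i hz1l hva1 hg0 hg0'
  obtain ⟨q1, hw1, hb1l, hb1u⟩ :=
    pairY hZ' i0 p1 a1 b1 ha1l ha1u w1 hw1i hw1l hvb1 hab1 hab1'
  obtain ⟨p2, hz2, ha2l, ha2u⟩ :=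
    pairX hZ' i0 q1 b1 a2 hb1l hb1u z2 hz2i hz2l hva2 hg1 hg1'
  obtain ⟨q2, hw2, hb2l, hb2u⟩ :=
    pairY hZ' i0 p2 a2 b2 ha2l ha2u w2 hw2i hw2l hvb2 hab2 hab2'
  have hp01 : p0 ≠ p1 := fun h =>
    absurd (show a0 = a1 by rw [← hva0, ← hva1, hz0, hz1, h]) (by intro h'; linarith)
  have hp02 : p0 ≠ p2 := fun h =>
    absurd (show a0 = a2 by rw [← hva0, ← hva2, hz0, hz2, h]) (by intro h'; linarith)
  have hp12 : p1 ≠ p2 := fun h =>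
    absurd (show a1 = a2 by rw [← hva1, ← hva2, hz1, hz2, h]) (by intro h'; linarith)
  have hq01 : q0 ≠ q1 := fun h =>
    absurd (show b0 = b1 by rw [← hvb0, ← hvb1, hw0, hw1, h]) (by intro h'; linarith)
  have hq02 : q0 ≠ q2 := fun h =>
    absurd (show b0 = b2 by rw [← hvb0, ← hvb2, hw0, hw2, h]) (by intro h'; linarith)
  have hq12 : q1 ≠ q2 := fun h =>
    absurd (show b1 = b2 by rw [← hvb1, ← hvb2, hw1, hw2, h]) (by intro h'; linarith)
  refine ⟨i0, fun j => ⟨?_, ?_⟩⟩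
  · rcases fin3_cases p0 p1 p2 hp01 hp02 hp12 j with h | h | h
    · exact Or.inl (by rw [h]; exact hz0)
    · exact Or.inr (Or.inl (by rw [h]; exact hz1))
    · exact Or.inr (Or.inr (by rw [h]; exact hz2))
  · rcases fin3_cases q0 q1 q2 hq01 hq02 hq12 j with h | h | h
    · exact Or.inl (by rw [h]; exact hw0)
    · exact Or.inr (Or.inl (by rw [h]; exact hw1))
    · exact Or.inr (Or.inr (by rw [h]; exact hw2))

end Aux

/-! ## STATEMENT 16 -/

set_option maxHeartbeats 2000000 in
/-- If `γ'` satisfies `(Z'_φ, ∅)` via `h'` and some subset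
`γ'' ⊆ γ'` satisfies `(Z_φ, ∅)`, then there is a clause `C_i` all of whose
variable images `h'(x^i_j), h'(y^i_j)` lie in `γ''`. -/
theorem statement16 {PV : Type*} (m k : ℕ) (hkm : k ≤ m)
    (lits : Fin m → Fin 3 → PV) (γ' : Config XY)
    (h' : MVar m → XY × Option ℝ≥0)
    (hsat : MSat (Z'Vars m) (Z'phiSat m lits) γ' h')
    (γ'' : Config XY) (hsub : γ'' ⊆ γ')
    (hz : ∃ h, MSat (ZVars m) (ZphiSat m k) γ'' h) :
    ∃ i : Fin m, ∀ j : Fin 3, h' (.xc i j) ∈ γ'' ∧ h' (.yc i j) ∈ γ'' := by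
  obtain ⟨hl1, hm1, hsur, ν', hv', hZ'⟩ := hsat
  obtain ⟨h, hl, hm, _, ν, hv, hZc⟩ := hz
  have key : ∀ y : MVar m, y ∈ ZVars m → ∃ z : MVar m, ¬ z.inZ ∧ z.loc = y.loc ∧
      h' z ∈ γ'' ∧ ((ν' z : ℝ) = ((ν y : ℝ))) := by
    intro y hy
    have hmem : h y ∈ γ'' := hm y hy
    obtain ⟨z, hz1, hz2⟩ := hsur (h y) (hsub hmem)
    have hzi : ¬ z.inZ := hz1
    refine ⟨z, hzi, ?_, by rw [hz2]; exact hmem, ?_⟩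
    · rw [← hl y hy, ← hz2]; exact (hl1 z hz1).symm
    · have e1 := hv' z hz1
      have e2 := hv y hy
      rw [hz2, e2] at e1
      exact_mod_cast (Option.some.inj e1).symm
  obtain ⟨zx0, zx0i, zx0l, zx0m, zx0v⟩ := key (.xp 0) trivial
  obtain ⟨zx1, zx1i, zx1l, zx1m, zx1v⟩ := key (.xp 1) trivial
  obtain ⟨zx2, zx2i, zx2l, zx2m, zx2v⟩ := key (.xp 2) trivial
  obtain ⟨zy0, zy0i, zy0l, zy0m, zy0v⟩ := key (.yp 0) trivial
  obtain ⟨zy1, zy1i, zy1l, zy1m, zy1v⟩ := key (.yp 1) trivial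
  obtain ⟨zy2, zy2i, zy2l, zy2m, zy2v⟩ := key (.yp 2) trivial
  obtain ⟨zu0, zu0i, zu0l, zu0m, zu0v⟩ := key (.xm 0) trivial
  obtain ⟨zu1, zu1i, zu1l, zu1m, zu1v⟩ := key (.xm 1) trivial
  obtain ⟨zu2, zu2i, zu2l, zu2m, zu2v⟩ := key (.xm 2) trivial
  obtain ⟨zw0, zw0i, zw0l, zw0m, zw0v⟩ := key (.ym 0) trivial
  obtain ⟨zw1, zw1i, zw1l, zw1m, zw1v⟩ := key (.ym 1) trivial
  obtain ⟨zw2, zw2i, zw2l, zw2m, zw2v⟩ := key (.ym 2) trivial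
  have P0 := hZc.1 0
  have P1 := hZc.1 1
  have P2 := hZc.1 2
  have N0 := hZc.2.1 0
  have N1 := hZc.2.1 1
  have N2 := hZc.2.1 2
  have G0 : 1 ≤ (ν (.xp 1) : ℝ) - (ν (.yp 0) : ℝ) ∧
      (ν (.xp 1) : ℝ) - (ν (.yp 0) : ℝ) ≤ 5 := hZc.2.2.1 0
  have G1 : 1 ≤ (ν (.xp 2) : ℝ) - (ν (.yp 1) : ℝ) ∧
      (ν (.xp 2) : ℝ) - (ν (.yp 1) : ℝ) ≤ 5 := hZc.2.2.1 1
  have H0 : 1 ≤ (ν (.xm 1) : ℝ) - (ν (.ym 0) : ℝ) ∧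
      (ν (.xm 1) : ℝ) - (ν (.ym 0) : ℝ) ≤ 5 := hZc.2.2.2.1 0
  have H1 : 1 ≤ (ν (.xm 2) : ℝ) - (ν (.ym 1) : ℝ) ∧
      (ν (.xm 2) : ℝ) - (ν (.ym 1) : ℝ) ≤ 5 := hZc.2.2.2.1 1
  have K2 := hZc.2.2.2.2.2.1
  have K3 := hZc.2.2.2.2.2.2
  have hq2le : ∀ q : Fin 3, ((q : ℕ) : ℝ) ≤ 2 := fun q => by exact_mod_cast q.is_le
  have hq0le : ∀ q : Fin 3, (0 : ℝ) ≤ ((q : ℕ) : ℝ) := fun q => Nat.cast_nonneg _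
  have hmr : (0 : ℝ) ≤ (m : ℝ) := Nat.cast_nonneg _
  have hkr : (0 : ℝ) ≤ (k : ℝ) := Nat.cast_nonneg _
  rcases classifyX hZ' zx0 zx0i zx0l with
    ⟨P0x, hex0, hvx0⟩ | ⟨i0, pp0, hex0, lo0, hi0⟩ | ⟨P0x, hex0, hvx0⟩
  · -- positive chain lies in the dummy block: analyze the negative chain
    rw [zx0v] at hvx0
    obtain ⟨Q0, hey0, hvy0⟩ : ∃ q : Fin 3, zy0 = .py q ∧ (ν' zy0 : ℝ) = 3 * ((q : ℕ) : ℝ) := by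
      rcases classifyY hZ' zy0 zy0i zy0l with c | ⟨i', q, he, lo, hi⟩ | ⟨q, he, hvq⟩
      · exact c
      · exfalso; rw [zy0v] at lo
        have hi'0 : (0 : ℝ) ≤ ((i' : ℕ) : ℝ) := Nat.cast_nonneg _
        linarith [P0.2, hq2le P0x, hq0le q]
      · exfalso; rw [zy0v] at hvq
        linarith [P0.2, hq2le P0x, hq0le q]
    rw [zy0v] at hvy0
    obtain ⟨P1x, hex1, hvx1⟩ : ∃ p : Fin 3, zx1 = .px p ∧ (ν' zx1 : ℝ) = 3 * ((p : ℕ) : ℝ) := by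
      rcases classifyX hZ' zx1 zx1i zx1l with c | ⟨i', p, he, lo, hi⟩ | ⟨p, he, hvp⟩
      · exact c
      · exfalso; rw [zx1v] at lo
        have hi'0 : (0 : ℝ) ≤ ((i' : ℕ) : ℝ) := Nat.cast_nonneg _
        linarith [G0.2, hq2le Q0, hq0le p]
      · exfalso; rw [zx1v] at hvp
        linarith [G0.2, hq2le Q0, hq0le p]
    rw [zx1v] at hvx1
    obtain ⟨Q1, hey1, hvy1⟩ : ∃ q : Fin 3, zy1 = .py q ∧ (ν' zy1 : ℝ) = 3 * ((q : ℕ) : ℝ) := by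
      rcases classifyY hZ' zy1 zy1i zy1l with c | ⟨i', q, he, lo, hi⟩ | ⟨q, he, hvq⟩
      · exact c
      · exfalso; rw [zy1v] at lo
        have hi'0 : (0 : ℝ) ≤ ((i' : ℕ) : ℝ) := Nat.cast_nonneg _
        linarith [P1.2, hq2le P1x, hq0le q]
      · exfalso; rw [zy1v] at hvq
        linarith [P1.2, hq2le P1x, hq0le q]
    rw [zy1v] at hvy1
    obtain ⟨P2x, hex2, hvx2⟩ : ∃ p : Fin 3, zx2 = .px p ∧ (ν' zx2 : ℝ) = 3 * ((p : ℕ) : ℝ) := by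
      rcases classifyX hZ' zx2 zx2i zx2l with c | ⟨i', p, he, lo, hi⟩ | ⟨p, he, hvp⟩
      · exact c
      · exfalso; rw [zx2v] at lo
        have hi'0 : (0 : ℝ) ≤ ((i' : ℕ) : ℝ) := Nat.cast_nonneg _
        linarith [G1.2, hq2le Q1, hq0le p]
      · exfalso; rw [zx2v] at hvp
        linarith [G1.2, hq2le Q1, hq0le p]
    rw [zx2v] at hvx2
    have s01 : 3 * (P0x : ℕ) + 1 ≤ 3 * (P1x : ℕ) := by
      exact_mod_cast (show (3 * ((P0x : ℕ) : ℝ) + 1 : ℝ) ≤ 3 * ((P1x : ℕ) : ℝ) by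
        linarith [P0.1, G0.1])
    have s12 : 3 * (P1x : ℕ) + 1 ≤ 3 * (P2x : ℕ) := by
      exact_mod_cast (show (3 * ((P1x : ℕ) : ℝ) + 1 : ℝ) ≤ 3 * ((P2x : ℕ) : ℝ) by
        linarith [P1.1, G1.1])
    have hP0x0 : (P0x : ℕ) = 0 := by have := P2x.is_le; omega
    have ha00 : (ν (.xp 0) : ℝ) = 0 := by rw [hvx0, hP0x0]; norm_num
    -- now the negative chain
    rcases classifyX hZ' zu0 zu0i zu0l with
      ⟨r, her, hvr⟩ | ⟨i0, r0, heu0, lou0, hiu0⟩ | ⟨r0, heu0, hvu0⟩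
    · exfalso; rw [zu0v] at hvr
      linarith [K2, hq2le r, hkr]
    · obtain ⟨i, hcov⟩ := clauseChain hZ' zu0 zu1 zu2 zw0 zw1 zw2 zu1i zu2i zw0i zw1i zw2i
        zu1l zu2l zw0l zw1l zw2l _ _ _ _ _ _ zu0v zu1v zu2v zw0v zw1v zw2v
        (by linarith [N0.1]) (by linarith [N0.2])
        (by linarith [N1.1]) (by linarith [N1.2])
        (by linarith [N2.1]) (by linarith [N2.2])
        (by linarith [H0.1]) (by linarith [H0.2]) (by linarith [H1.1]) (by linarith [H1.2])
        i0 r0 heu0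
      refine ⟨i, fun j => ⟨?_, ?_⟩⟩
      · rcases (hcov j).1 with hh | hh | hh
        · rw [← hh]; exact zu0m
        · rw [← hh]; exact zu1m
        · rw [← hh]; exact zu2m
      · rcases (hcov j).2 with hh | hh | hh
        · rw [← hh]; exact zw0m
        · rw [← hh]; exact zw1m
        · rw [← hh]; exact zw2m
    · -- negative chain in the dummy n-block: contradiction
      exfalso
      rw [zu0v] at hvu0
      obtain ⟨s0, hew0, hvw0⟩ : ∃ s : Fin 3, zw0 = .ny s ∧
          (ν' zw0 : ℝ) = 14 * ((m : ℝ) + 1) + 3 * ((s : ℕ) : ℝ) + 2 := by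
        rcases classifyY hZ' zw0 zw0i zw0l with ⟨s, he, hvs⟩ | ⟨i', s, he, lo, hi⟩ | c
        · exfalso; rw [zw0v] at hvs
          linarith [N0.1, hq0le r0, hq2le s, hmr]
        · exfalso; rw [zw0v] at hi
          have him : ((i' : ℕ) : ℝ) + 1 ≤ (m : ℝ) := by exact_mod_cast i'.isLt
          linarith [N0.1, hq0le r0, hq2le s]
        · exact c
      rw [zw0v] at hvw0
      obtain ⟨r1, heu1, hvu1⟩ : ∃ r : Fin 3, zu1 = .nx r ∧
          (ν' zu1 : ℝ) = 14 * ((m : ℝ) + 1) + 3 * ((r : ℕ) : ℝ) := by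
        rcases classifyX hZ' zu1 zu1i zu1l with ⟨r, he, hvr⟩ | ⟨i', r, he, lo, hi⟩ | c
        · exfalso; rw [zu1v] at hvr
          linarith [H0.1, hq0le s0, hq2le r, hmr]
        · exfalso; rw [zu1v] at hi
          have him : ((i' : ℕ) : ℝ) + 1 ≤ (m : ℝ) := by exact_mod_cast i'.isLt
          linarith [H0.1, hq0le s0, hq2le r]
        · exact c
      rw [zu1v] at hvu1
      obtain ⟨s1, hew1, hvw1⟩ : ∃ s : Fin 3, zw1 = .ny s ∧
          (ν' zw1 : ℝ) = 14 * ((m : ℝ) + 1) + 3 * ((s : ℕ) : ℝ) + 2 := by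
        rcases classifyY hZ' zw1 zw1i zw1l with ⟨s, he, hvs⟩ | ⟨i', s, he, lo, hi⟩ | c
        · exfalso; rw [zw1v] at hvs
          linarith [N1.1, hq0le r1, hq2le s, hmr]
        · exfalso; rw [zw1v] at hi
          have him : ((i' : ℕ) : ℝ) + 1 ≤ (m : ℝ) := by exact_mod_cast i'.isLt
          linarith [N1.1, hq0le r1, hq2le s]
        · exact c
      rw [zw1v] at hvw1
      obtain ⟨r2, heu2, hvu2⟩ : ∃ r : Fin 3, zu2 = .nx r ∧
          (ν' zu2 : ℝ) = 14 * ((m : ℝ) + 1) + 3 * ((r : ℕ) : ℝ) := by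
        rcases classifyX hZ' zu2 zu2i zu2l with ⟨r, he, hvr⟩ | ⟨i', r, he, lo, hi⟩ | c
        · exfalso; rw [zu2v] at hvr
          linarith [H1.1, hq0le s1, hq2le r, hmr]
        · exfalso; rw [zu2v] at hi
          have him : ((i' : ℕ) : ℝ) + 1 ≤ (m : ℝ) := by exact_mod_cast i'.isLt
          linarith [H1.1, hq0le s1, hq2le r]
        · exact c
      rw [zu2v] at hvu2
      obtain ⟨s2, hew2, hvw2⟩ : ∃ s : Fin 3, zw2 = .ny s ∧
          (ν' zw2 : ℝ) = 14 * ((m : ℝ) + 1) + 3 * ((s : ℕ) : ℝ) + 2 := by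
        rcases classifyY hZ' zw2 zw2i zw2l with ⟨s, he, hvs⟩ | ⟨i', s, he, lo, hi⟩ | c
        · exfalso; rw [zw2v] at hvs
          linarith [N2.1, hq0le r2, hq2le s, hmr]
        · exfalso; rw [zw2v] at hi
          have him : ((i' : ℕ) : ℝ) + 1 ≤ (m : ℝ) := by exact_mod_cast i'.isLt
          linarith [N2.1, hq0le r2, hq2le s]
        · exact c
      rw [zw2v] at hvw2
      have n0 : 3 * (r0 : ℕ) < 3 * (s0 : ℕ) + 1 := by
        exact_mod_cast (show (3 * ((r0 : ℕ) : ℝ) : ℝ) < 3 * ((s0 : ℕ) : ℝ) + 1 by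
          linarith [N0.1])
      have n1 : 3 * (s0 : ℕ) + 3 ≤ 3 * (r1 : ℕ) := by
        exact_mod_cast (show (3 * ((s0 : ℕ) : ℝ) + 3 : ℝ) ≤ 3 * ((r1 : ℕ) : ℝ) by
          linarith [H0.1])
      have n2 : 3 * (r1 : ℕ) < 3 * (s1 : ℕ) + 1 := by
        exact_mod_cast (show (3 * ((r1 : ℕ) : ℝ) : ℝ) < 3 * ((s1 : ℕ) : ℝ) + 1 by
          linarith [N1.1])
      have n3 : 3 * (s1 : ℕ) + 3 ≤ 3 * (r2 : ℕ) := by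
        exact_mod_cast (show (3 * ((s1 : ℕ) : ℝ) + 3 : ℝ) ≤ 3 * ((r2 : ℕ) : ℝ) by
          linarith [H1.1])
      have n4 : 3 * (r2 : ℕ) < 3 * (s2 : ℕ) + 1 := by
        exact_mod_cast (show (3 * ((r2 : ℕ) : ℝ) : ℝ) < 3 * ((s2 : ℕ) : ℝ) + 1 by
          linarith [N2.1])
      have hs2 : (s2 : ℕ) = 2 := by have := s2.is_le; omega
      have hs2r : ((s2 : ℕ) : ℝ) = 2 := by rw [hs2]; norm_num
      linarith [K3]
  · -- positive chain lies in a clause block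
    obtain ⟨i, hcov⟩ := clauseChain hZ' zx0 zx1 zx2 zy0 zy1 zy2 zx1i zx2i zy0i zy1i zy2i
      zx1l zx2l zy0l zy1l zy2l _ _ _ _ _ _ zx0v zx1v zx2v zy0v zy1v zy2v
      (by linarith [P0.1]) (by linarith [P0.2])
      (by linarith [P1.1]) (by linarith [P1.2])
      (by linarith [P2.1]) (by linarith [P2.2])
      (by linarith [G0.1]) (by linarith [G0.2]) (by linarith [G1.1]) (by linarith [G1.2])
      i0 pp0 hex0
    refine ⟨i, fun j => ⟨?_, ?_⟩⟩
    · rcases (hcov j).1 with hh | hh | hh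
      · rw [← hh]; exact zx0m
      · rw [← hh]; exact zx1m
      · rw [← hh]; exact zx2m
    · rcases (hcov j).2 with hh | hh | hh
      · rw [← hh]; exact zy0m
      · rw [← hh]; exact zy1m
      · rw [← hh]; exact zy2m
  · -- x⁺₁ cannot lie in the n-block
    exfalso
    rw [zx0v] at hvx0
    obtain ⟨Q0, hey0, hvy0⟩ : ∃ q : Fin 3, zy0 = .ny q ∧
        (ν' zy0 : ℝ) = 14 * ((m : ℝ) + 1) + 3 * ((q : ℕ) : ℝ) + 2 := by
      rcases classifyY hZ' zy0 zy0i zy0l with ⟨q, he, hvq⟩ | ⟨i', q, he, lo, hi⟩ | c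
      · exfalso; rw [zy0v] at hvq
        linarith [P0.1, hq0le P0x, hq2le q, hmr]
      · exfalso; rw [zy0v] at hi
        have him : ((i' : ℕ) : ℝ) + 1 ≤ (m : ℝ) := by exact_mod_cast i'.isLt
        linarith [P0.1, hq0le P0x, hq2le q]
      · exact c
    rw [zy0v] at hvy0
    have c1 : 3 * (Q0 : ℕ) + 2 ≤ 3 * (P0x : ℕ) + 1 := by
      exact_mod_cast (show (3 * ((Q0 : ℕ) : ℝ) + 2 : ℝ) ≤ 3 * ((P0x : ℕ) : ℝ) + 1 by
        linarith [P0.2])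
    have c2 : 3 * (P0x : ℕ) ≤ 3 * (Q0 : ℕ) + 2 := by
      exact_mod_cast (show (3 * ((P0x : ℕ) : ℝ) : ℝ) ≤ 3 * ((Q0 : ℕ) : ℝ) + 2 by
        linarith [P0.1])
    omega

end ATAPaper
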